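/- For every integer d ≥ 2, the map π_o : SC_d(0,2;o) → S^{d-2} sending ((x,r),(y,s)) to (x − y)/‖x − y‖ is a well-defined continuous map and a homotopy equivalence; moreover π_o(τ(c)) = −π_o(c) for every c ∈ SC_d(0,2;o), where τ swaps the two semiballs. In particular the configuration space SC_d(0,2;o) of two nonoverlapping semiballs in the closed upper unit semiball is homotopy equivalent to the sphere S^{d-2}. -/
import Mathlib


noncomputable section

/-- The configuration space `SC_d(0,2;o)` of two nonoverlapping semiballs in the closed
upper unit semiball of `ℝ^d`. -/
def SC02 (d : ℕ) (hd : 2 ≤ d) :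
    Set ((EuclideanSpace ℝ (Fin d) × ℝ) × (EuclideanSpace ℝ (Fin d) × ℝ)) :=
  {c | 0 < c.1.2 ∧ 0 < c.2.2 ∧
       c.1.1 ⟨d - 1, by omega⟩ = 0 ∧ c.2.1 ⟨d - 1, by omega⟩ = 0 ∧
       ‖c.1.1‖ + c.1.2 ≤ 1 ∧ ‖c.2.1‖ + c.2.2 ≤ 1 ∧
       ‖c.1.1 - c.2.1‖ ≥ c.1.2 + c.2.2}

/-- The sphere `S^{d-2} = {z ∈ S^{d-1} : z_d = 0}` inside `ℝ^d`. -/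
def sphereLast (d : ℕ) (hd : 2 ≤ d) : Set (EuclideanSpace ℝ (Fin d)) :=
  {z | ‖z‖ = 1 ∧ z ⟨d - 1, by omega⟩ = 0}

/-- The raw formula of the projection `π_o`, sending `((x,r),(y,s))` to `(x−y)/‖x−y‖`. -/
def rawPi (d : ℕ) :
    (EuclideanSpace ℝ (Fin d) × ℝ) × (EuclideanSpace ℝ (Fin d) × ℝ) →
      EuclideanSpace ℝ (Fin d) :=
  fun c => ‖c.1.1 - c.2.1‖⁻¹ • (c.1.1 - c.2.1)

namespace SwissAux

lemma norm_pos_of_mem {d : ℕ} {hd : 2 ≤ d}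
    {c : (EuclideanSpace ℝ (Fin d) × ℝ) × (EuclideanSpace ℝ (Fin d) × ℝ)}
    (hc : c ∈ SC02 d hd) : 0 < ‖c.1.1 - c.2.1‖ := by
  obtain ⟨hr, hs, -, -, -, -, hsep⟩ := hc
  linarith

lemma rawPi_mem {d : ℕ} (hd : 2 ≤ d)
    {c : (EuclideanSpace ℝ (Fin d) × ℝ) × (EuclideanSpace ℝ (Fin d) × ℝ)}
    (hc : c ∈ SC02 d hd) : rawPi d c ∈ sphereLast d hd := by
  have hn := norm_pos_of_mem hc
  obtain ⟨hr, hs, hx, hy, -, -, hsep⟩ := hc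
  constructor
  · rw [rawPi, norm_smul, norm_inv, norm_norm, inv_mul_cancel₀ hn.ne']
  · show (‖c.1.1 - c.2.1‖⁻¹ • (c.1.1 - c.2.1)) ⟨d - 1, by omega⟩ = 0
    simp [PiLp.smul_apply, PiLp.sub_apply, hx, hy]

lemma cont_rawPi {d : ℕ} (hd : 2 ≤ d) :
    Continuous (fun c : SC02 d hd => rawPi d c.1) := by
  have h1 : Continuous (fun c : SC02 d hd => c.1.1.1 - c.1.2.1) := by fun_prop
  exact ((h1.norm.inv₀ (fun c => (norm_pos_of_mem c.2).ne')).smul h1)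

/-- The projection map as a continuous map. -/
def piMap (d : ℕ) (hd : 2 ≤ d) : C(SC02 d hd, sphereLast d hd) :=
  ⟨fun c => ⟨rawPi d c.1, rawPi_mem hd c.2⟩, by
    apply Continuous.subtype_mk
    exact cont_rawPi hd⟩

lemma sigma_mem {d : ℕ} (hd : 2 ≤ d) (z : sphereLast d hd) :
    ((((1/2 : ℝ) • (z : EuclideanSpace ℝ (Fin d)), (1/4 : ℝ)),
      (-((1/2 : ℝ) • (z : EuclideanSpace ℝ (Fin d))), (1/4 : ℝ)))) ∈ SC02 d hd := by
  obtain ⟨hz1, hz2⟩ := z.2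
  have hhalf : ‖(1/2 : ℝ) • (z : EuclideanSpace ℝ (Fin d))‖ = 1/2 := by
    rw [norm_smul, hz1]; norm_num
  refine ⟨by norm_num, by norm_num, ?_, ?_, ?_, ?_, ?_⟩
  · show ((1/2 : ℝ) • (z : EuclideanSpace ℝ (Fin d))) ⟨d - 1, by omega⟩ = 0
    simp [PiLp.smul_apply, hz2]
  · show (-((1/2 : ℝ) • (z : EuclideanSpace ℝ (Fin d)))) ⟨d - 1, by omega⟩ = 0
    simp [PiLp.smul_apply, PiLp.neg_apply, hz2]
  · rw [hhalf]; norm_num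
  · rw [norm_neg, hhalf]; norm_num
  · show ‖(1/2 : ℝ) • (z : EuclideanSpace ℝ (Fin d)) -
      (-((1/2 : ℝ) • (z : EuclideanSpace ℝ (Fin d))))‖ ≥ 1/4 + 1/4
    rw [sub_neg_eq_add, ← add_smul]
    norm_num [norm_smul, hz1]

/-- The section map as a continuous map. -/
def sigmaMap (d : ℕ) (hd : 2 ≤ d) : C(sphereLast d hd, SC02 d hd) :=
  ⟨fun z => ⟨(((1/2 : ℝ) • (z : EuclideanSpace ℝ (Fin d)), (1/4 : ℝ)),
      (-((1/2 : ℝ) • (z : EuclideanSpace ℝ (Fin d))), (1/4 : ℝ))), sigma_mem hd z⟩, by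
    apply Continuous.subtype_mk
    fun_prop⟩

lemma pi_sigma (d : ℕ) (hd : 2 ≤ d) :
    (piMap d hd).comp (sigmaMap d hd) = ContinuousMap.id _ := by
  apply ContinuousMap.ext
  intro z
  apply Subtype.ext
  obtain ⟨hz1, hz2⟩ := z.2
  show rawPi d (((1/2 : ℝ) • (z : EuclideanSpace ℝ (Fin d)), (1/4 : ℝ)),
      (-((1/2 : ℝ) • (z : EuclideanSpace ℝ (Fin d))), (1/4 : ℝ))) =
      (z : EuclideanSpace ℝ (Fin d))
  rw [rawPi]
  simp only [sub_neg_eq_add]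
  rw [← add_smul]
  norm_num [norm_smul, hz1]

end SwissAux

namespace SwissAux2
open SwissAux

lemma convex_pos {a t : ℝ} (ha : 0 < a) (ht0 : 0 ≤ t) (ht1 : t ≤ 1) :
    0 < (1 - t) * a + t * (1/4) := by
  rcases lt_or_ge t 1 with h | h
  · have h1 : 0 < (1 - t) * a := mul_pos (by linarith) ha
    nlinarith
  · nlinarith

/-- The straight-line deformation toward the standard configuration. -/
def Hraw (d : ℕ) (hd : 2 ≤ d) (t : ℝ) (c : SC02 d hd) :
    (EuclideanSpace ℝ (Fin d) × ℝ) × (EuclideanSpace ℝ (Fin d) × ℝ) :=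
  (((1 - t) • c.1.1.1 + (t/2) • rawPi d c.1, (1 - t) * c.1.1.2 + t * (1/4)),
   ((1 - t) • c.1.2.1 - (t/2) • rawPi d c.1, (1 - t) * c.1.2.2 + t * (1/4)))

lemma Hraw_mem (d : ℕ) (hd : 2 ≤ d) {t : ℝ} (ht0 : 0 ≤ t) (ht1 : t ≤ 1)
    (c : SC02 d hd) : Hraw d hd t c ∈ SC02 d hd := by
  obtain ⟨hr, hs, hx, hy, hb1, hb2, hsep⟩ := c.2
  have hn : 0 < ‖c.1.1.1 - c.1.2.1‖ := norm_pos_of_mem c.2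
  obtain ⟨hu1, hu2⟩ := rawPi_mem hd c.2
  set x := c.1.1.1 with hxdef
  set y := c.1.2.1 with hydef
  set u := rawPi d c.1 with hudef
  have hudef' : u = ‖x - y‖⁻¹ • (x - y) := rfl
  have h1mt : ‖(1 - t : ℝ)‖ = 1 - t := by
    rw [Real.norm_eq_abs]; exact abs_of_nonneg (by linarith)
  have ht2 : ‖(t/2 : ℝ)‖ = t/2 := by
    rw [Real.norm_eq_abs]; exact abs_of_nonneg (by linarith)
  refine ⟨convex_pos hr ht0 ht1, convex_pos hs ht0 ht1, ?_, ?_, ?_, ?_, ?_⟩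
  · show ((1 - t) • x + (t/2) • u) ⟨d - 1, by omega⟩ = 0
    simp [PiLp.add_apply, PiLp.smul_apply, hx, hu2]
  · show ((1 - t) • y - (t/2) • u) ⟨d - 1, by omega⟩ = 0
    simp [PiLp.sub_apply, PiLp.smul_apply, hy, hu2]
  · show ‖(1 - t) • x + (t/2) • u‖ + ((1 - t) * c.1.1.2 + t * (1/4)) ≤ 1
    have hN : ‖(1 - t) • x + (t/2) • u‖ ≤ (1 - t) * ‖x‖ + t/2 := by
      calc ‖(1 - t) • x + (t/2) • u‖ ≤ ‖(1 - t) • x‖ + ‖(t/2) • u‖ := norm_add_le _ _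
        _ = (1 - t) * ‖x‖ + t/2 := by rw [norm_smul, norm_smul, h1mt, ht2, hu1, mul_one]
    have hmul : (1 - t) * (‖x‖ + c.1.1.2) ≤ (1 - t) * 1 :=
      mul_le_mul_of_nonneg_left hb1 (by linarith)
    nlinarith
  · show ‖(1 - t) • y - (t/2) • u‖ + ((1 - t) * c.1.2.2 + t * (1/4)) ≤ 1
    have hN : ‖(1 - t) • y - (t/2) • u‖ ≤ (1 - t) * ‖y‖ + t/2 := by
      calc ‖(1 - t) • y - (t/2) • u‖ ≤ ‖(1 - t) • y‖ + ‖(t/2) • u‖ := norm_sub_le _ _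
        _ = (1 - t) * ‖y‖ + t/2 := by rw [norm_smul, norm_smul, h1mt, ht2, hu1, mul_one]
    have hmul : (1 - t) * (‖y‖ + c.1.2.2) ≤ (1 - t) * 1 :=
      mul_le_mul_of_nonneg_left hb2 (by linarith)
    nlinarith
  · show ‖((1 - t) • x + (t/2) • u) - ((1 - t) • y - (t/2) • u)‖ ≥
      ((1 - t) * c.1.1.2 + t * (1/4)) + ((1 - t) * c.1.2.2 + t * (1/4))
    have hXY : ((1 - t) • x + (t/2) • u) - ((1 - t) • y - (t/2) • u)
        = ((1 - t) + t * ‖x - y‖⁻¹) • (x - y) := by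
      rw [hudef']; module
    have hcoef : (0 : ℝ) ≤ (1 - t) + t * ‖x - y‖⁻¹ := by
      have : 0 ≤ t * ‖x - y‖⁻¹ := mul_nonneg ht0 (by positivity)
      linarith
    have hval : ‖((1 - t) • x + (t/2) • u) - ((1 - t) • y - (t/2) • u)‖
        = (1 - t) * ‖x - y‖ + t := by
      rw [hXY, norm_smul, Real.norm_eq_abs, abs_of_nonneg hcoef]
      field_simp
    rw [hval]
    have hmul2 : (1 - t) * (c.1.1.2 + c.1.2.2) ≤ (1 - t) * ‖x - y‖ :=
      mul_le_mul_of_nonneg_left hsep (by linarith)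
    nlinarith

end SwissAux2

namespace SwissAux3
open SwissAux SwissAux2

/-- The homotopy from the identity to `σ ∘ π`. -/
def idToSigmaPi (d : ℕ) (hd : 2 ≤ d) :
    (ContinuousMap.id (SC02 d hd)).Homotopy ((sigmaMap d hd).comp (piMap d hd)) where
  toFun := fun p => ⟨Hraw d hd (p.1 : ℝ) p.2,
    Hraw_mem d hd (unitInterval.nonneg p.1) (unitInterval.le_one p.1) p.2⟩
  continuous_toFun := by
    apply Continuous.subtype_mk
    have hT : Continuous (fun p : unitInterval × SC02 d hd => (p.1 : ℝ)) :=
      continuous_subtype_val.comp continuous_fst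
    have hU : Continuous (fun p : unitInterval × SC02 d hd => rawPi d p.2.1) :=
      (cont_rawPi hd).comp continuous_snd
    have hX : Continuous (fun p : unitInterval × SC02 d hd => p.2.1.1.1) := by fun_prop
    have hY : Continuous (fun p : unitInterval × SC02 d hd => p.2.1.2.1) := by fun_prop
    have hR : Continuous (fun p : unitInterval × SC02 d hd => p.2.1.1.2) := by fun_prop
    have hS : Continuous (fun p : unitInterval × SC02 d hd => p.2.1.2.2) := by fun_prop
    have h1mt : Continuous (fun p : unitInterval × SC02 d hd => (1 : ℝ) - (p.1 : ℝ)) :=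
      continuous_const.sub hT
    have ht2 : Continuous (fun p : unitInterval × SC02 d hd => (p.1 : ℝ)/2) :=
      hT.div_const 2
    exact (((h1mt.smul hX).add (ht2.smul hU)).prodMk
        ((h1mt.mul hR).add (hT.mul continuous_const))).prodMk
      (((h1mt.smul hY).sub (ht2.smul hU)).prodMk
        ((h1mt.mul hS).add (hT.mul continuous_const)))
  map_zero_left := by
    intro c
    apply Subtype.ext
    show Hraw d hd (0 : ℝ) c = c.1
    simp [Hraw]
  map_one_left := by
    intro c
    apply Subtype.ext
    show Hraw d hd (1 : ℝ) c =
      (((1/2 : ℝ) • rawPi d c.1, (1/4 : ℝ)), (-((1/2 : ℝ) • rawPi d c.1), (1/4 : ℝ)))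
    simp [Hraw]

/-- The homotopy equivalence. -/
def theEquiv (d : ℕ) (hd : 2 ≤ d) :
    ContinuousMap.HomotopyEquiv (SC02 d hd) (sphereLast d hd) where
  toFun := piMap d hd
  invFun := sigmaMap d hd
  left_inv := ⟨(idToSigmaPi d hd).symm⟩
  right_inv := by
    rw [pi_sigma d hd]

end SwissAux3


/-- For every integer `d ≥ 2`, the map
`π_o : SC_d(0,2;o) → S^{d-2}`, `((x,r),(y,s)) ↦ (x−y)/‖x−y‖`, is well defined and
continuous, it is a homotopy equivalence, and `π_o(τ(c)) = −π_o(c)` where `τ` swaps the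
two semiballs.  In particular `SC_d(0,2;o)` is homotopy equivalent to `S^{d-2}`. -/
theorem swissCheese_two_semiballs_homotopy_equiv_sphere (d : ℕ) (hd : 2 ≤ d) :
    (∀ c ∈ SC02 d hd, rawPi d c ∈ sphereLast d hd) ∧
    Continuous (fun c : SC02 d hd => rawPi d c.1) ∧
    (∃ h : ContinuousMap.HomotopyEquiv (SC02 d hd) (sphereLast d hd),
        ∀ c : SC02 d hd, (h.toFun c : EuclideanSpace ℝ (Fin d)) = rawPi d c.1) ∧
    (∀ c ∈ SC02 d hd, Prod.swap c ∈ SC02 d hd ∧ rawPi d (Prod.swap c) = - rawPi d c) := by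
  refine ⟨fun c hc => SwissAux.rawPi_mem hd hc, SwissAux.cont_rawPi hd,
    ⟨SwissAux3.theEquiv d hd, fun c => rfl⟩, ?_⟩
  intro c hc
  obtain ⟨hr, hs, hx, hy, hb1, hb2, hsep⟩ := hc
  refine ⟨⟨hs, hr, hy, hx, hb2, hb1, ?_⟩, ?_⟩
  · show ‖c.2.1 - c.1.1‖ ≥ c.2.2 + c.1.2
    rw [norm_sub_rev] at hsep; linarith
  show ‖c.2.1 - c.1.1‖⁻¹ • (c.2.1 - c.1.1) = -(‖c.1.1 - c.2.1‖⁻¹ • (c.1.1 - c.2.1))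
  rw [norm_sub_rev, ← neg_sub c.1.1 c.2.1, smul_neg]
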